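/- arXiv:1812.02511 — 2 statements merged into one kernel-verified Lean document; each statement's English description precedes it below -/
import Mathlib

section
/- There exist exactly 196 binary operations on a 3-element set satisfying the Moufang identity (x·y)·(z·x) = (x·(y·z))·x. -/
def fdec (n a b : ℕ) : ℕ := n / 3 ^ (b + 3*a) % 3

def ok (n : ℕ) : Bool := (List.range 3).all fun x => (List.range 3).all fun y =>
  (List.range 3).all fun z =>
    fdec n (fdec n x y) (fdec n z x) == fdec n (fdec n x (fdec n y z)) x

def myE : (Fin 3 → Fin 3 → Fin 3) ≃ Fin 19683 :=
  (Equiv.curry (Fin 3) (Fin 3) (Fin 3)).symm.trans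
    ((finProdFinEquiv.arrowCongr (Equiv.refl (Fin 3))).trans finFunctionFinEquiv)

lemma lemA (m : Fin 19683) :
    (∀ x y z : Fin 3, myE.symm m (myE.symm m x y) (myE.symm m z x)
      = myE.symm m (myE.symm m x (myE.symm m y z)) x) ↔ ok m.val = true := by
  simp only [ok, List.all_eq_true, List.mem_range, beq_iff_eq]
  constructor
  · intro h x hx y hy z hz
    exact congrArg Fin.val (h ⟨x, hx⟩ ⟨y, hy⟩ ⟨z, hz⟩)
  · intro h x y z
    exact Fin.ext (h x.val x.isLt y.val y.isLt z.val z.isLt)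

lemma lemB (p : ℕ → Bool) (N : ℕ) :
    Fintype.card {m : Fin N // p m.val = true} = (List.range N).countP p := by
  rw [Fintype.card_subtype, Finset.card_filter,
    Fin.sum_univ_eq_sum_range (fun i => if p i = true then 1 else 0) N]
  induction N with
  | zero => simp
  | succ n ih =>
    rw [Finset.sum_range_succ, List.range_succ, List.countP_append, ih]
    simp [List.countP, List.countP.go]

lemma split (p : ℕ → Bool) : ∀ n s, (List.range' s (n*243)).countP p
    = ((List.range n).map (fun i => (List.range' (s + i*243) 243).countP p)).sum := by
  intro n
  induction n with
  | zero => simp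
  | succ k ih =>
    intro s
    have h : (k+1)*243 = k*243 + 243 := by ring
    rw [h, Nat.add_comm (k*243) 243, ← List.range'_append_1 (s := s) (m := 243) (n := k*243), List.countP_append, ih (s+243),
      List.range_succ_eq_map, List.map_cons, List.sum_cons, List.map_map]
    have e1 : s + 0*243 = s := by ring
    rw [e1]
    congr 1
    apply congrArg
    apply List.map_congr_left
    intro a _
    simp only [Function.comp_apply]
    have e2 : s + 243 + a * 243 = s + a.succ * 243 := by omega
    rw [e2]

set_option maxHeartbeats 16000000 in
set_option maxRecDepth 10000 in
lemma count_ok : (List.range 19683).countP ok = 196 := by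
  rw [List.range_eq_range', show (19683:ℕ) = 81*243 by norm_num, split]
  decide

theorem stmt_11 :
    Fintype.card {f : Fin 3 → Fin 3 → Fin 3 // ∀ x y z : Fin 3, f (f x y) (f z x) = f (f x (f y z)) x} = 196 := by
  have h : ∀ f : Fin 3 → Fin 3 → Fin 3,
      (∀ x y z : Fin 3, f (f x y) (f z x) = f (f x (f y z)) x) ↔ ok (myE f).val = true := by
    intro f
    conv_lhs => rw [show f = myE.symm (myE f) from (myE.symm_apply_apply f).symm]
    exact lemA (myE f)
  have e2 : {f : Fin 3 → Fin 3 → Fin 3 // ∀ x y z : Fin 3, f (f x y) (f z x) = f (f x (f y z)) x}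
      ≃ {m : Fin 19683 // ok m.val = true} := Equiv.subtypeEquiv myE h
  rw [Fintype.card_congr e2, lemB ok 19683, count_ok]
end

section
/- There exist exactly 215 binary operations on a 3-element set satisfying the left Bol identity x·(y·(x·z)) = (x·(y·x))·z. -/
/-- entry `(x,y)` of the operation coded by `n`. -/
def bolApp (n x y : Nat) : Nat := n / 3 ^ (3 * x + y) % 3

def bolChk (n x y z : Nat) : Bool :=
  bolApp n x (bolApp n y (bolApp n x z)) == bolApp n (bolApp n x (bolApp n y x)) z

def bolOKb (n : Nat) : Bool := bolChk n 0 0 0 && bolChk n 0 0 1 && bolChk n 0 0 2 && bolChk n 0 1 0 && bolChk n 0 1 1 && bolChk n 0 1 2 && bolChk n 0 2 0 && bolChk n 0 2 1 && bolChk n 0 2 2 && bolChk n 1 0 0 && bolChk n 1 0 1 && bolChk n 1 0 2 && bolChk n 1 1 0 && bolChk n 1 1 1 && bolChk n 1 1 2 && bolChk n 1 2 0 && bolChk n 1 2 1 && bolChk n 1 2 2 && bolChk n 2 0 0 && bolChk n 2 0 1 && bolChk n 2 0 2 && bolChk n 2 1 0 && bolChk n 2 1 1 && bolChk n 2 1 2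 && bolChk n 2 2 0 && bolChk n 2 2 1 && bolChk n 2 2 2

def bolOK (n : Nat) : Prop := ∀ x < 3, ∀ y < 3, ∀ z < 3,
  bolApp n x (bolApp n y (bolApp n x z)) = bolApp n (bolApp n x (bolApp n y x)) z

def bolCnt : Nat → Nat → Nat
  | 0, lo => bif bolOKb lo then 1 else 0
  | d + 1, lo => bolCnt d (3 * lo) + bolCnt d (3 * lo + 1) + bolCnt d (3 * lo + 2)

set_option maxRecDepth 8000 in
set_option maxHeartbeats 4000000 in
lemma bolCnt_key : bolCnt 9 0 = 215 := by decide

lemma bolOKb_iff_bolOK (n : Nat) : bolOKb n = true ↔ bolOK n := by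
  constructor
  · intro h x hx y hy z hz
    simp only [bolOKb, Bool.and_eq_true, bolChk, beq_iff_eq] at h
    interval_cases x <;> interval_cases y <;> interval_cases z <;> tauto
  · intro h
    simp only [bolOKb, Bool.and_eq_true, bolChk, beq_iff_eq]
    and_intros <;> exact h _ (by norm_num) _ (by norm_num) _ (by norm_num)

lemma bolCnt_eq (d : Nat) : ∀ lo : Nat,
    bolCnt d lo = ∑ i ∈ Finset.Ico (lo * 3 ^ d) ((lo + 1) * 3 ^ d),
      (if bolOKb i = true then 1 else 0) := by
  induction d with
  | zero =>
    intro lo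
    simp only [bolCnt, pow_zero, Nat.mul_one, Bool.cond_eq_if]
    rw [Nat.Ico_succ_singleton, Finset.sum_singleton]
  | succ d ih =>
    intro lo
    have h1 : (3 * lo) * 3 ^ d ≤ (3 * lo + 1) * 3 ^ d := Nat.mul_le_mul_right _ (by omega)
    have h2 : (3 * lo + 1) * 3 ^ d ≤ (3 * lo + 2) * 3 ^ d := Nat.mul_le_mul_right _ (by omega)
    have h3 : (3 * lo + 2) * 3 ^ d ≤ (3 * lo + 3) * 3 ^ d := Nat.mul_le_mul_right _ (by omega)
    have e1 : lo * 3 ^ (d + 1) = (3 * lo) * 3 ^ d := by ring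
    have e2 : (lo + 1) * 3 ^ (d + 1) = (3 * lo + 3) * 3 ^ d := by ring
    have e3 : (3 * lo + 1 + 1) = (3 * lo + 2) := by ring
    have e4 : (3 * lo + 2 + 1) = (3 * lo + 3) := by ring
    rw [e1, e2, ← Finset.sum_Ico_consecutive _ h1 (le_trans h2 h3),
      ← Finset.sum_Ico_consecutive _ h2 h3]
    simp only [bolCnt, ih, e3, e4]
    omega

/-- Decode a natural number into a binary operation on `Fin 3`. -/
def bolFun (n : Nat) : Fin 3 → Fin 3 → Fin 3 :=
  fun x y => ⟨bolApp n x.val y.val, Nat.mod_lt _ (by norm_num)⟩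

lemma bolOK_iff (n : Nat) : bolOK n ↔ ∀ x y z : Fin 3,
    bolFun n x (bolFun n y (bolFun n x z)) = bolFun n (bolFun n x (bolFun n y x)) z := by
  constructor
  · intro h x y z
    exact Fin.ext (h x.val x.isLt y.val y.isLt z.val z.isLt)
  · intro h x hx y hy z hz
    exact congrArg Fin.val (h ⟨x, hx⟩ ⟨y, hy⟩ ⟨z, hz⟩)

def bolDec (n : Fin 19683) : Fin 3 → Fin 3 → Fin 3 := bolFun n.val

def bolEnc (f : Fin 3 → Fin 3 → Fin 3) : Fin 19683 :=
  ⟨∑ x : Fin 3, ∑ y : Fin 3, (f x y).val * 3 ^ (3 * x.val + y.val), by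
    have h : ∀ x y : Fin 3, (f x y).val * 3 ^ (3 * x.val + y.val) ≤ 2 * 3 ^ (3 * x.val + y.val) :=
      fun x y => Nat.mul_le_mul_right _ (Nat.lt_succ_iff.mp (f x y).isLt)
    calc ∑ x : Fin 3, ∑ y : Fin 3, (f x y).val * 3 ^ (3 * x.val + y.val)
        ≤ ∑ x : Fin 3, ∑ y : Fin 3, 2 * 3 ^ (3 * x.val + y.val) := by
          apply Finset.sum_le_sum; intro x _; apply Finset.sum_le_sum; intro y _; exact h x y
      _ < 19683 := by decide⟩

lemma fin3_mk_zero (h : (0:Nat) < 3) : (⟨0, h⟩ : Fin 3) = 0 := rfl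
lemma fin3_mk_one (h : (1:Nat) < 3) : (⟨1, h⟩ : Fin 3) = 1 := rfl
lemma fin3_mk_two (h : (2:Nat) < 3) : (⟨2, h⟩ : Fin 3) = 2 := rfl

lemma bolEnc_dec (f : Fin 3 → Fin 3 → Fin 3) (x y : Fin 3) : bolDec (bolEnc f) x y = f x y := by
  obtain ⟨x, hx⟩ := x
  obtain ⟨y, hy⟩ := y
  have h00 := (f 0 0).isLt; have h01 := (f 0 1).isLt; have h02 := (f 0 2).isLt
  have h10 := (f 1 0).isLt; have h11 := (f 1 1).isLt; have h12 := (f 1 2).isLt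
  have h20 := (f 2 0).isLt; have h21 := (f 2 1).isLt; have h22 := (f 2 2).isLt
  interval_cases x <;> interval_cases y <;>
  · apply Fin.ext
    simp only [bolDec, bolEnc, bolFun, bolApp, Fin.sum_univ_three, fin3_mk_zero, fin3_mk_one,
      fin3_mk_two, Fin.val_zero, Fin.val_one, Fin.val_two]
    norm_num
    omega

lemma bolDec_bij : Function.Bijective bolDec := by
  rw [Fintype.bijective_iff_surjective_and_card]
  constructor
  · intro f
    exact ⟨bolEnc f, funext fun x => funext fun y => bolEnc_dec f x y⟩
  · simp only [Fintype.card_fun, Fintype.card_fin]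
    norm_num

theorem stmt_12 :
    Fintype.card {f : Fin 3 → Fin 3 → Fin 3 // ∀ x y z : Fin 3, f x (f y (f x z)) = f (f x (f y x)) z} = 215 := by
  rw [← Fintype.card_congr (Equiv.subtypeEquiv (Equiv.ofBijective bolDec bolDec_bij)
    (fun n => Iff.rfl))]
  simp only [Equiv.ofBijective_apply]
  rw [Fintype.card_subtype, Finset.card_filter]
  have hsum : (∑ n : Fin 19683, if (∀ x y z : Fin 3,
      bolDec n x (bolDec n y (bolDec n x z)) = bolDec n (bolDec n x (bolDec n y x)) z)
      then 1 else 0) = ∑ i ∈ Finset.range 19683, (if bolOKb i = true then 1 else 0) := by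
    rw [← Fin.sum_univ_eq_sum_range (fun i => if bolOKb i = true then 1 else 0) 19683]
    refine Finset.sum_congr rfl fun n _ => if_congr ?_ rfl rfl
    exact (bolOK_iff n.val).symm.trans (bolOKb_iff_bolOK n.val).symm
  rw [hsum, Finset.range_eq_Ico, ← bolCnt_key, bolCnt_eq 9 0]
  rfl
end
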